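/- Let G be a torus acting linearly on a finite-dimensional complex vector space V. A nonzero vector v* ∈ V is G-polystable (its orbit G·v* is closed) if and only if the weight polytope N_G(v*) contains the origin in its relative/topological interior. -/

import Mathlib

open Filter Set Topology

noncomputable def Complex.abs : AbsoluteValue ℂ ℝ := NormedField.toAbsoluteValue ℂ

lemma Complex.abs_apply (z : ℂ) : Complex.abs z = ‖z‖ := rfl

lemma Complex.norm_eq_abs (z : ℂ) : ‖z‖ = Complex.abs z := rfl

lemma Complex.continuous_abs : Continuous Complex.abs := continuous_norm

lemma Complex.abs_ofReal (r : ℝ) : Complex.abs (r : ℂ) = |r| := Complex.norm_real r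

lemma Complex.normSq_eq_abs (z : ℂ) : Complex.normSq z = Complex.abs z ^ 2 :=
  Complex.normSq_eq_norm_sq z

namespace TorusPoly




variable {ι κ : Type*} [Fintype ι] [Fintype κ]

def orbitSet (χ : κ → ι → ℤ) : Set (κ → ℂ) :=
  {x | ∃ t : ι → ℂ, (∀ j, t j ≠ 0) ∧ ∀ k, x k = ∏ j, t j ^ χ k j}

lemma abs_prod_zpow (t : ι → ℂ) (m : ι → ℤ) :
    Complex.abs (∏ j, t j ^ m j) = ∏ j, Complex.abs (t j) ^ m j := by
  rw [map_prod]
  exact Finset.prod_congr rfl fun j _ => map_zpow₀ Complex.abs _ _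

lemma log_prod_zpow (r : ι → ℝ) (hr : ∀ j, r j ≠ 0) (m : ι → ℤ) :
    Real.log (∏ j, r j ^ m j) = ∑ j, (m j : ℝ) * Real.log (r j) := by
  rw [Real.log_prod fun j _ => zpow_ne_zero _ (hr j)]
  exact Finset.sum_congr rfl fun j _ => Real.log_zpow _ _

lemma exp_zpow (y : ℝ) (m : ℤ) : Real.exp y ^ m = Real.exp ((m : ℝ) * y) := by
  rw [← Real.rpow_intCast, Real.rpow_def_of_pos (Real.exp_pos y), Real.log_exp, mul_comm]

theorem isClosed_orbitSet (χ : κ → ι → ℤ) (lam : κ → ℝ) (hpos : ∀ k, 0 < lam k)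
    (hzero : ∀ j, ∑ k, lam k * (χ k j : ℝ) = 0) : IsClosed (orbitSet χ) := by
  classical
  -- the linear "weight" map
  let A : (ι → ℝ) →ₗ[ℝ] (κ → ℝ) :=
    { toFun := fun v k => ∑ j, (χ k j : ℝ) * v j
      map_add' := by
        intro v v'; funext k
        simp [mul_add, Finset.sum_add_distrib]
      map_smul' := by
        intro c v; funext k
        simp [Finset.mul_sum, mul_left_comm] }
  refine isClosed_of_closure_subset ?_
  intro x hx
  obtain ⟨u, hu, hulim⟩ := mem_closure_iff_seq_limit.1 hx
  choose t ht0 hut using hu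
  -- basic positivity of coordinates along the sequence
  have hupos : ∀ n k, 0 < Complex.abs (u n k) := by
    intro n k
    rw [hut n k]
    exact AbsoluteValue.pos _ (Finset.prod_ne_zero_iff.2 fun j _ => zpow_ne_zero _ (ht0 n j))
  have habs : ∀ n k, Complex.abs (u n k) = ∏ j, Complex.abs (t n j) ^ χ k j := by
    intro n k; rw [hut n k, abs_prod_zpow]
  have hkey : ∀ n, A (fun j => Real.log (Complex.abs (t n j))) =
      fun k => Real.log (Complex.abs (u n k)) := by
    intro n; funext k
    rw [habs n k, log_prod_zpow _ (fun j => (AbsoluteValue.ne_zero _ (ht0 n j)))]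
    rfl
  -- the λ-weighted sum of logs vanishes
  have hlam : ∀ n, ∑ k, lam k * Real.log (Complex.abs (u n k)) = 0 := by
    intro n
    have h1 : ∀ k, Real.log (Complex.abs (u n k)) =
        ∑ j, (χ k j : ℝ) * Real.log (Complex.abs (t n j)) := fun k =>
      (congrFun (hkey n) k).symm
    simp only [h1, Finset.mul_sum]
    rw [Finset.sum_comm]
    refine Finset.sum_eq_zero fun j _ => ?_
    have : ∑ k, lam k * ((χ k j : ℝ) * Real.log (Complex.abs (t n j)))
        = (∑ k, lam k * (χ k j : ℝ)) * Real.log (Complex.abs (t n j)) := by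
      rw [Finset.sum_mul]
      exact Finset.sum_congr rfl fun k _ => by ring
    rw [this, hzero j, zero_mul]
  -- coordinatewise convergence of absolute values
  have hcoord : ∀ k, Tendsto (fun n => u n k) atTop (𝓝 (x k)) :=
    fun k => (tendsto_pi_nhds.1 hulim) k
  have habslim : ∀ k, Tendsto (fun n => Complex.abs (u n k)) atTop (𝓝 (Complex.abs (x k))) :=
    fun k => (Complex.continuous_abs.tendsto _).comp (hcoord k)
  -- Step 1: all coordinates of the limit are nonzero
  have hxne : ∀ k, x k ≠ 0 := by
    intro k₀ hk₀
    -- the k₀ term tends to -∞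
    have h0 : Tendsto (fun n => Complex.abs (u n k₀)) atTop (𝓝[>] 0) := by
      rw [tendsto_nhdsWithin_iff]
      constructor
      · simpa [hk₀] using habslim k₀
      · exact Eventually.of_forall fun n => hupos n k₀
    have hlog : Tendsto (fun n => Real.log (Complex.abs (u n k₀))) atTop atBot :=
      Real.tendsto_log_nhdsGT_zero.comp h0
    have hterm : Tendsto (fun n => lam k₀ * Real.log (Complex.abs (u n k₀))) atTop atBot :=
      hlog.const_mul_atBot (hpos k₀)
    -- eventual upper bounds on the other terms
    set B : κ → ℝ := fun k => lam k * Real.log (Complex.abs (x k) + 1) with hB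
    have hbnd : ∀ᶠ n in atTop, ∀ k,
        lam k * Real.log (Complex.abs (u n k)) ≤ B k := by
      rw [eventually_all]
      intro k
      have h1 : ∀ᶠ n in atTop, Complex.abs (u n k) < Complex.abs (x k) + 1 :=
        (habslim k).eventually_lt_const (by linarith [AbsoluteValue.nonneg Complex.abs (x k)])
      filter_upwards [h1] with n hn
      exact mul_le_mul_of_nonneg_left
        (Real.log_le_log (hupos n k) hn.le) (hpos k).le
    have hev : ∀ᶠ n in atTop,
        lam k₀ * Real.log (Complex.abs (u n k₀)) < -(∑ k ∈ Finset.univ.erase k₀, B k) :=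
      hterm.eventually_lt_atBot _
    obtain ⟨n, h1, h2⟩ := (hbnd.and hev).exists
    have hsplit : ∑ k, lam k * Real.log (Complex.abs (u n k)) =
        lam k₀ * Real.log (Complex.abs (u n k₀)) +
          ∑ k ∈ Finset.univ.erase k₀, lam k * Real.log (Complex.abs (u n k)) := by
      rw [← Finset.add_sum_erase _ _ (Finset.mem_univ k₀)]
    have hle : ∑ k ∈ Finset.univ.erase k₀, lam k * Real.log (Complex.abs (u n k)) ≤
        ∑ k ∈ Finset.univ.erase k₀, B k :=
      Finset.sum_le_sum fun k _ => h1 k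
    have := hlam n
    rw [hsplit] at this
    linarith
  -- Step 2: the modulus vector comes from the range of A
  have hrange : (fun k => Real.log (Complex.abs (x k))) ∈ LinearMap.range A := by
    have hcl : IsClosed ((LinearMap.range A : Submodule ℝ (κ → ℝ)) : Set (κ → ℝ)) :=
      Submodule.closed_of_finiteDimensional _
    have htd : Tendsto (fun n => A fun j => Real.log (Complex.abs (t n j))) atTop
        (𝓝 fun k => Real.log (Complex.abs (x k))) := by
      simp only [hkey]
      rw [tendsto_pi_nhds]
      intro k
      exact (Real.continuousAt_log (AbsoluteValue.ne_zero _ (hxne k))).tendsto.comp (habslim k)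
    exact hcl.mem_of_tendsto htd (Eventually.of_forall fun n => ⟨_, rfl⟩)
  obtain ⟨r, hr⟩ := hrange
  -- Step 3: the phase vector lies in the compact image of the torus
  set g : (ι → ℂ) → (κ → ℂ) := fun z k =>
    ∏ j, (z j ^ (χ k j).toNat * (starRingEnd ℂ) (z j) ^ ((-(χ k j)).toNat)) with hg
  have hgcont : Continuous g := by
    refine continuous_pi fun k => continuous_finset_prod _ fun j _ => ?_
    exact ((continuous_apply j).pow _).mul
      ((Complex.continuous_conj.comp (continuous_apply j)).pow _)
  have hgval : ∀ z : ι → ℂ, (∀ j, Complex.abs (z j) = 1) →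
      ∀ k, g z k = ∏ j, z j ^ χ k j := by
    intro z hz k
    refine Finset.prod_congr rfl fun j _ => ?_
    have hzj : z j ≠ 0 := by
      intro h; have := hz j; rw [h] at this; simpa using this
    have hconj : (starRingEnd ℂ) (z j) = (z j)⁻¹ := by
      refine eq_inv_of_mul_eq_one_right ?_
      rw [Complex.mul_conj]
      norm_cast
      rw [Complex.normSq_eq_abs, hz j]; norm_num
    rw [hconj, inv_pow, ← zpow_natCast (z j) (χ k j).toNat,
      ← zpow_natCast (z j) ((-(χ k j)).toNat), ← zpow_neg, ← zpow_add₀ hzj]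
    congr 1
    omega
  set Ksp : Set (ι → ℂ) := {z | ∀ j, Complex.abs (z j) = 1} with hKsp
  have hKcompact : IsCompact Ksp := by
    have : Ksp = Set.pi Set.univ fun _ : ι => Metric.sphere (0 : ℂ) 1 := by
      ext z
      simp [hKsp, Set.mem_pi, mem_sphere_zero_iff_norm, Complex.norm_eq_abs]
    rw [this]
    exact isCompact_univ_pi fun _ => isCompact_sphere 0 1
  set ζ : ℕ → (ι → ℂ) := fun n j => t n j / (Complex.abs (t n j) : ℂ) with hζ
  have hζK : ∀ n, ζ n ∈ Ksp := by
    intro n j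
    have h := ht0 n j
    show Complex.abs (t n j / ((Complex.abs (t n j) : ℝ) : ℂ)) = 1
    rw [map_div₀, Complex.abs_ofReal, abs_of_pos (AbsoluteValue.pos Complex.abs h),
      div_self (AbsoluteValue.ne_zero _ h)]
  have hgζ : ∀ n k, g (ζ n) k = u n k / ((Complex.abs (u n k) : ℝ) : ℂ) := by
    intro n k
    rw [hgval _ (hζK n) k]
    simp only [hζ, div_zpow]
    rw [Finset.prod_div_distrib, ← hut n k]
    congr 1
    rw [habs n k]
    push_cast
    rfl
  have htend2 : Tendsto (fun n => g (ζ n)) atTop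
      (𝓝 fun k => x k / ((Complex.abs (x k) : ℝ) : ℂ)) := by
    have heq : (fun n => g (ζ n)) = fun n k => u n k / ((Complex.abs (u n k) : ℝ) : ℂ) := by
      funext n k; exact hgζ n k
    rw [heq, tendsto_pi_nhds]
    intro k
    refine Tendsto.div (hcoord k)
      ((Complex.continuous_ofReal.tendsto _).comp (habslim k)) ?_
    simpa using AbsoluteValue.ne_zero Complex.abs (hxne k)
  have himg : IsClosed (g '' Ksp) := (hKcompact.image hgcont).isClosed
  have hxhat : (fun k => x k / ((Complex.abs (x k) : ℝ) : ℂ)) ∈ g '' Ksp :=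
    himg.mem_of_tendsto htend2 (Eventually.of_forall fun n => ⟨ζ n, hζK n, rfl⟩)
  obtain ⟨z, hzK, hgz⟩ := hxhat
  -- Step 4: assemble
  refine ⟨fun j => (Real.exp (r j) : ℂ) * z j, fun j => ?_, fun k => ?_⟩
  · refine mul_ne_zero (by simpa using Real.exp_ne_zero (r j)) ?_
    intro h; have := hzK j; rw [h] at this; simpa using this
  · have h1 : ∏ j, ((Real.exp (r j) : ℂ) * z j) ^ χ k j =
        (∏ j, ((Real.exp (r j) : ℂ)) ^ χ k j) * ∏ j, z j ^ χ k j := by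
      rw [← Finset.prod_mul_distrib]
      exact Finset.prod_congr rfl fun j _ => mul_zpow _ _ _
    have h2 : ∏ j, ((Real.exp (r j) : ℂ)) ^ χ k j =
        ((Complex.abs (x k) : ℝ) : ℂ) := by
      have : ∏ j, Real.exp (r j) ^ χ k j = Complex.abs (x k) := by
        have hs : ∏ j, Real.exp (r j) ^ χ k j = Real.exp (∑ j, (χ k j : ℝ) * r j) := by
          rw [Real.exp_sum]
          exact Finset.prod_congr rfl fun j _ => exp_zpow _ _
        rw [hs]
        have := congrFun hr k
        simp only [A, LinearMap.coe_mk, AddHom.coe_mk] at this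
        rw [this, Real.exp_log (AbsoluteValue.pos _ (hxne k))]
      rw [← this]
      push_cast
      rfl
    have h3 : ∏ j, z j ^ χ k j = x k / ((Complex.abs (x k) : ℝ) : ℂ) := by
      rw [← hgval z hzK k, hgz]
    rw [h1, h2, h3, mul_div_cancel₀]
    simpa using AbsoluteValue.ne_zero Complex.abs (hxne k)

lemma prod_rpow_sum (a : ℝ) (ha : 0 < a) (f : ι → ℝ) :
    ∏ j, a ^ f j = a ^ (∑ j, f j) := by
  simp only [Real.rpow_def_of_pos ha, ← Real.exp_sum, Finset.mul_sum]

theorem not_isClosed_orbitSet (χ : κ → ι → ℤ) (u : ι → ℝ)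
    (hge : ∀ k, 0 ≤ ∑ j, u j * (χ k j : ℝ)) (k₀ : κ)
    (hk₀ : 0 < ∑ j, u j * (χ k₀ j : ℝ)) : ¬ IsClosed (orbitSet χ) := by
  classical
  intro hcl
  set d : κ → ℝ := fun k => ∑ j, u j * (χ k j : ℝ) with hd
  set a : ℕ → ℝ := fun n => ((n : ℝ) + 1)⁻¹ with ha
  have hapos : ∀ n, 0 < a n := fun n => by positivity
  set x : ℕ → (κ → ℂ) := fun n k => ((a n ^ d k : ℝ) : ℂ) with hx
  have hmem : ∀ n, x n ∈ orbitSet χ := by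
    intro n
    refine ⟨fun j => ((a n ^ u j : ℝ) : ℂ), fun j => ?_, fun k => ?_⟩
    · simp only [ne_eq, Complex.ofReal_eq_zero]
      exact (Real.rpow_pos_of_pos (hapos n) _).ne'
    · have hreal : ∏ j, (a n ^ u j) ^ χ k j = a n ^ d k := by
        have h1 : ∀ j, (a n ^ u j) ^ χ k j = a n ^ (u j * (χ k j : ℝ)) := by
          intro j
          rw [← Real.rpow_intCast (a n ^ u j) (χ k j), ← Real.rpow_mul (hapos n).le]
        rw [Finset.prod_congr rfl fun j _ => h1 j, prod_rpow_sum _ (hapos n)]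
      calc x n k = ((∏ j, (a n ^ u j) ^ χ k j : ℝ) : ℂ) := by rw [hreal]
        _ = ∏ j, ((a n ^ u j : ℝ) : ℂ) ^ χ k j := by
            push_cast
            rfl
  set xlim : κ → ℂ := fun k => if d k = 0 then 1 else 0 with hxlim
  have htend : Tendsto x atTop (𝓝 xlim) := by
    rw [tendsto_pi_nhds]
    intro k
    by_cases h : d k = 0
    · simp only [hx, hxlim, h, Real.rpow_zero, if_pos]
      simp [tendsto_const_nhds]
    · have hdk : 0 < d k := lt_of_le_of_ne (hge k) (Ne.symm h)
      simp only [hx, hxlim, if_neg h]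
      have hlog : Tendsto (fun n => Real.log (a n)) atTop atBot := by
        have h1 : Tendsto (fun n : ℕ => (n : ℝ) + 1) atTop atTop :=
          tendsto_atTop_add_const_right _ 1 tendsto_natCast_atTop_atTop
        have h2 : Tendsto (fun n : ℕ => Real.log ((n : ℝ) + 1)) atTop atTop :=
          Real.tendsto_log_atTop.comp h1
        have h3 : (fun n => Real.log (a n)) = fun n : ℕ => -Real.log ((n : ℝ) + 1) := by
          funext n; rw [ha]; simp [Real.log_inv]
        rw [h3]
        exact tendsto_neg_atBot_iff.2 h2
      have h4 : Tendsto (fun n => Real.log (a n) * d k) atTop atBot :=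
        hlog.atBot_mul_const hdk
      have h5 : Tendsto (fun n => a n ^ d k) atTop (𝓝 0) := by
        have h6 : (fun n => a n ^ d k) = fun n => Real.exp (Real.log (a n) * d k) := by
          funext n; rw [Real.rpow_def_of_pos (hapos n)]
        rw [h6]
        exact Real.tendsto_exp_atBot.comp h4
      have := (Complex.continuous_ofReal.tendsto 0).comp h5
      simpa [Function.comp_def] using this
  have hxlimmem : xlim ∈ orbitSet χ :=
    hcl.mem_of_tendsto htend (Eventually.of_forall hmem)
  obtain ⟨t, ht0, hval⟩ := hxlimmem
  have h1 : xlim k₀ = 0 := by simp only [hxlim, if_neg (show d k₀ ≠ 0 from hk₀.ne')]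
  rw [hval k₀] at h1
  exact (Finset.prod_ne_zero_iff.2 fun j _ => zpow_ne_zero _ (ht0 j)) h1




variable {E : Type*} [NormedAddCommGroup E] [NormedSpace ℝ E]

lemma mem_interior_preimage_val_iff (A K : Set E) (x : E) (hx : x ∈ A) :
    (⟨x, hx⟩ : A) ∈ interior (Subtype.val ⁻¹' K : Set A) ↔
      ∃ ε > 0, ∀ z ∈ A, dist z x < ε → z ∈ K := by
  rw [mem_interior_iff_mem_nhds, Metric.mem_nhds_iff]
  constructor
  · rintro ⟨ε, hε, hball⟩
    refine ⟨ε, hε, fun z hz hd => ?_⟩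
    exact hball (show (⟨z, hz⟩ : A) ∈ Metric.ball _ _ by
      simpa [Metric.mem_ball, Subtype.dist_eq] using hd)
  · rintro ⟨ε, hε, h⟩
    refine ⟨ε, hε, fun z hz => ?_⟩
    exact h z.1 z.2 (by simpa [Metric.mem_ball, Subtype.dist_eq] using hz)

lemma zero_mem_intrinsicInterior_iff (K : Set E) (h0 : (0 : E) ∈ affineSpan ℝ K) :
    (0 : E) ∈ intrinsicInterior ℝ K ↔
      ∃ ε > 0, ∀ z ∈ (affineSpan ℝ K : Set E), dist z 0 < ε → z ∈ K := by
  rw [mem_intrinsicInterior]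
  constructor
  · rintro ⟨y, hy, hy0⟩
    have hyy : y = ⟨0, h0⟩ := Subtype.ext hy0
    rw [hyy] at hy
    exact (mem_interior_preimage_val_iff _ K 0 h0).1 hy
  · intro h
    exact ⟨⟨0, h0⟩, (mem_interior_preimage_val_iff _ K 0 h0).2 h, rfl⟩

lemma affineSpan_set_eq_span (s : Set E) (h0 : (0 : E) ∈ affineSpan ℝ s) :
    (affineSpan ℝ s : Set E) = (Submodule.span ℝ s : Set E) := by
  apply subset_antisymm
  · have h1 : affineSpan ℝ s ≤ (Submodule.span ℝ s).toAffineSubspace :=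
      affineSpan_le.2 Submodule.subset_span
    exact fun z hz => h1 hz
  · intro z hz
    induction hz using Submodule.span_induction with
    | mem y hy => exact subset_affineSpan ℝ s hy
    | zero => exact h0
    | add a b _ _ ha hb =>
        have := AffineSubspace.smul_vsub_vadd_mem (affineSpan ℝ s) (1 : ℝ) ha h0 hb
        simpa using this
    | smul c a _ ha =>
        have := AffineSubspace.smul_vsub_vadd_mem (affineSpan ℝ s) c ha h0 h0
        simpa using this

variable [DecidableEq ι]

lemma linear_apply_eq_sum (g : (ι → ℝ) →ₗ[ℝ] ℝ) (y : ι → ℝ) :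
    g y = ∑ j, y j * g (fun j' => if j = j' then 1 else 0) := by
  conv_lhs => rw [pi_eq_sum_univ y]
  rw [map_sum]
  exact Finset.sum_congr rfl fun j _ => by rw [map_smul, smul_eq_mul]

lemma exists_sep (p : κ → (ι → ℝ)) [Nonempty κ] (hp : Function.Injective p)
    (h : (0 : ι → ℝ) ∉ intrinsicInterior ℝ (convexHull ℝ (Set.range p))) :
    ∃ u : ι → ℝ, (∀ k, 0 ≤ ∑ j, u j * p k j) ∧ ∃ k, 0 < ∑ j, u j * p k j := by
  classical
  set K : Set (ι → ℝ) := convexHull ℝ (Set.range p) with hK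
  have hKconv : Convex ℝ K := convex_convexHull _ _
  have hKne : K.Nonempty :=
    ⟨p (Classical.arbitrary κ), subset_convexHull _ _ (mem_range_self _)⟩
  by_cases h0 : (0 : ι → ℝ) ∈ K
  · -- 0 ∈ K but not in the intrinsic interior: separate in the span
    set E₀ : Submodule ℝ (ι → ℝ) := Submodule.span ℝ (Set.range p) with hE₀
    have h0aff : (0 : ι → ℝ) ∈ affineSpan ℝ K := subset_affineSpan ℝ K h0
    have haffK : affineSpan ℝ K = affineSpan ℝ (Set.range p) := affineSpan_convexHull _
    have h0aff' : (0 : ι → ℝ) ∈ affineSpan ℝ (Set.range p) := haffK ▸ h0aff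
    have hset : (affineSpan ℝ K : Set (ι → ℝ)) = (E₀ : Set (ι → ℝ)) := by
      rw [haffK]
      exact affineSpan_set_eq_span _ h0aff'
    have hpE₀ : ∀ k, p k ∈ E₀ := fun k => Submodule.subset_span (mem_range_self k)
    -- the preimage of K in E₀ has nonempty interior
    obtain ⟨q, hq⟩ := hKne.intrinsicInterior hKconv
    have hqK : q ∈ K := intrinsicInterior_subset hq
    have hqaff : q ∈ affineSpan ℝ K := subset_affineSpan ℝ K hqK
    have hqeps : ∃ ε > 0, ∀ z ∈ (affineSpan ℝ K : Set (ι → ℝ)), dist z q < ε → z ∈ K := by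
      obtain ⟨y, hy, hyq⟩ := mem_intrinsicInterior.1 hq
      have hyy : y = ⟨q, hqaff⟩ := Subtype.ext hyq
      rw [hyy] at hy
      exact (mem_interior_preimage_val_iff _ K q hqaff).1 hy
    have hqE₀ : q ∈ E₀ := by rw [← SetLike.mem_coe, ← hset]; exact hqaff
    have hqint : (⟨q, hqE₀⟩ : E₀) ∈ interior (Subtype.val ⁻¹' K : Set E₀) := by
      obtain ⟨ε, hε, hb⟩ := hqeps
      exact (mem_interior_preimage_val_iff (E₀ : Set (ι → ℝ)) K q hqE₀).2
        ⟨ε, hε, fun z hz => hb z (by rw [hset]; exact hz)⟩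
    have h0E₀ : (0 : ι → ℝ) ∈ E₀ := E₀.zero_mem
    have h0int : ((0 : E₀) : E₀) ∉ interior (Subtype.val ⁻¹' K : Set E₀) := by
      intro hcon
      apply h
      rw [zero_mem_intrinsicInterior_iff K h0aff]
      have hcon' : (⟨(0 : ι → ℝ), h0E₀⟩ : (E₀ : Set (ι → ℝ))) ∈
          interior (Subtype.val ⁻¹' K : Set (E₀ : Set (ι → ℝ))) := hcon
      obtain ⟨ε, hε, hb⟩ := (mem_interior_preimage_val_iff (E₀ : Set (ι → ℝ)) K 0 h0E₀).1 hcon'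
      exact ⟨ε, hε, fun z hz => hb z (hset ▸ hz)⟩
    have hCconv : Convex ℝ (Subtype.val ⁻¹' K : Set E₀) :=
      hKconv.linear_preimage (E₀.subtype)
    obtain ⟨f, hf⟩ := geometric_hahn_banach_open_point hCconv.interior isOpen_interior h0int
    have hf0 : f 0 = 0 := map_zero f
    -- f is ≤ 0 on the preimage of K
    have hfK : ∀ yk : E₀, (yk : ι → ℝ) ∈ K → f yk ≤ 0 := by
      intro yk hyk
      have hseg := hCconv.openSegment_interior_self_subset_interior hqint
        (show yk ∈ (Subtype.val ⁻¹' K : Set E₀) from hyk)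
      have hval : ∀ n : ℕ, ((n : ℝ) + 2)⁻¹ * f ⟨q, hqE₀⟩ + (1 - ((n : ℝ) + 2)⁻¹) * f yk < 0 := by
        intro n
        have hn0 : (0 : ℝ) < ((n : ℝ) + 2)⁻¹ := by positivity
        have hn1 : ((n : ℝ) + 2)⁻¹ < 1 := by
          rw [inv_lt_one_iff₀]; right; linarith [Nat.cast_nonneg (α := ℝ) n]
        have hmem : ((n : ℝ) + 2)⁻¹ • (⟨q, hqE₀⟩ : E₀) + (1 - ((n : ℝ) + 2)⁻¹) • yk ∈
            interior (Subtype.val ⁻¹' K : Set E₀) := by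
          apply hseg
          exact ⟨_, _, hn0, by linarith, by ring, rfl⟩
        have := hf _ hmem
        rw [hf0, map_add, map_smul, map_smul, smul_eq_mul, smul_eq_mul] at this
        exact this
      have htnd : Tendsto (fun n : ℕ => ((n : ℝ) + 2)⁻¹ * f ⟨q, hqE₀⟩ +
          (1 - ((n : ℝ) + 2)⁻¹) * f yk) atTop (𝓝 (f yk)) := by
        have hinv : Tendsto (fun n : ℕ => ((n : ℝ) + 2)⁻¹) atTop (𝓝 0) :=
          tendsto_inv_atTop_zero.comp
            (tendsto_atTop_add_const_right _ 2 tendsto_natCast_atTop_atTop)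
        have := (hinv.mul_const (f ⟨q, hqE₀⟩)).add
          (((tendsto_const_nhds (x := (1:ℝ))).sub hinv).mul_const (f yk))
        simpa using this
      exact le_of_tendsto htnd (Eventually.of_forall fun n => (hval n).le)
    -- f is negative at some generator
    have hq0 : f ⟨q, hqE₀⟩ < 0 := by
      have := hf _ hqint; rwa [hf0] at this
    have hfS : ∃ k, f ⟨p k, hpE₀ k⟩ < 0 := by
      by_contra hall
      push_neg at hall
      have hzero : ∀ k, f ⟨p k, hpE₀ k⟩ = 0 := fun k =>
        le_antisymm (hfK _ (subset_convexHull _ _ (mem_range_self k))) (hall k)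
      -- q is a convex combination of the p k
      have hrange : Set.range p = ↑(Finset.univ.image p) := by
        rw [Finset.coe_image, Finset.coe_univ, Set.image_univ]
      have hqK' := hqK
      rw [hK, hrange, Finset.mem_convexHull'] at hqK'
      obtain ⟨wf, _, _, hwsum⟩ := hqK'
      have hsum2 : ∑ k, wf (p k) • p k = q := by
        rw [← hwsum, Finset.sum_image]
        intro a _ b _ hab
        exact hp hab
      have hqvec : (⟨q, hqE₀⟩ : E₀) = ∑ k, wf (p k) • (⟨p k, hpE₀ k⟩ : E₀) := by
        apply Subtype.ext
        push_cast
        rw [← hsum2]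
      rw [hqvec, map_sum] at hq0
      have : ∑ k, f (wf (p k) • (⟨p k, hpE₀ k⟩ : E₀)) = 0 := by
        refine Finset.sum_eq_zero fun k _ => ?_
        rw [map_smul, hzero k, smul_zero]
      rw [this] at hq0
      exact lt_irrefl _ hq0
    obtain ⟨k₁, hk₁⟩ := hfS
    -- extend f to the ambient space via a projection
    obtain ⟨E₁, hcompl⟩ := Submodule.exists_isCompl E₀
    set pr : (ι → ℝ) →ₗ[ℝ] E₀ := E₀.projectionOnto E₁ hcompl with hpr
    set g : (ι → ℝ) →ₗ[ℝ] ℝ := (f : E₀ →ₗ[ℝ] ℝ).comp pr with hg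
    have hgp : ∀ k, g (p k) = f ⟨p k, hpE₀ k⟩ := by
      intro k
      have : pr (p k) = ⟨p k, hpE₀ k⟩ := by
        have := Submodule.projectionOnto_apply_left hcompl ⟨p k, hpE₀ k⟩
        simpa [hpr] using this
      simp [hg, this]
    refine ⟨fun j => -g (fun j' => if j = j' then 1 else 0), fun k => ?_, k₁, ?_⟩
    · have h1 : ∑ j, (-g fun j' => if j = j' then 1 else 0) * p k j = -g (p k) := by
        rw [linear_apply_eq_sum g (p k), ← Finset.sum_neg_distrib]
        exact Finset.sum_congr rfl fun j _ => by ring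
      rw [h1, hgp k]
      have := hfK ⟨p k, hpE₀ k⟩ (subset_convexHull _ _ (mem_range_self k))
      linarith
    · have h1 : ∑ j, (-g fun j' => if j = j' then 1 else 0) * p k₁ j = -g (p k₁) := by
        rw [linear_apply_eq_sum g (p k₁), ← Finset.sum_neg_distrib]
        exact Finset.sum_congr rfl fun j _ => by ring
      rw [h1, hgp k₁]
      linarith
  · -- 0 ∉ K : strict separation from a compact convex set
    have hKcl : IsClosed K := (Set.finite_range p).isClosed_convexHull (𝕜 := ℝ)
    obtain ⟨f, s, hfK, hs0⟩ := geometric_hahn_banach_closed_point hKconv hKcl h0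
    rw [map_zero] at hs0
    refine ⟨fun j => -f.toLinearMap (fun j' => if j = j' then 1 else 0), fun k => ?_,
      Classical.arbitrary κ, ?_⟩
    · have h1 : ∑ j, (-f.toLinearMap fun j' => if j = j' then 1 else 0) * p k j
          = -f.toLinearMap (p k) := by
        rw [linear_apply_eq_sum f.toLinearMap (p k), ← Finset.sum_neg_distrib]
        exact Finset.sum_congr rfl fun j _ => by ring
      rw [h1]
      have := hfK (p k) (subset_convexHull _ _ (mem_range_self k))
      have h2 : f.toLinearMap (p k) = f (p k) := rfl
      rw [h2]
      linarith
    · set k := Classical.arbitrary κ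
      have h1 : ∑ j, (-f.toLinearMap fun j' => if j = j' then 1 else 0) * p k j
          = -f.toLinearMap (p k) := by
        rw [linear_apply_eq_sum f.toLinearMap (p k), ← Finset.sum_neg_distrib]
        exact Finset.sum_congr rfl fun j _ => by ring
      rw [h1]
      have := hfK (p k) (subset_convexHull _ _ (mem_range_self k))
      have h2 : f.toLinearMap (p k) = f (p k) := rfl
      rw [h2]
      linarith

lemma exists_pos_combination (p : κ → E) (hp : Function.Injective p)
    (h : (0 : E) ∈ intrinsicInterior ℝ (convexHull ℝ (Set.range p))) :
    ∃ lam : κ → ℝ, (∀ k, 0 < lam k) ∧ ∑ k, lam k • p k = 0 := by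
  classical
  set K : Set E := convexHull ℝ (Set.range p) with hK
  have hK0 : (0 : E) ∈ K := intrinsicInterior_subset h
  have h0aff : (0 : E) ∈ affineSpan ℝ K := subset_affineSpan ℝ K hK0
  obtain ⟨ε, hε, hball⟩ := (zero_mem_intrinsicInterior_iff K h0aff).1 h
  have hrange : Set.range p = ↑(Finset.univ.image p) := by
    rw [Finset.coe_image, Finset.coe_univ, Set.image_univ]
  have hstep : ∀ k₀ : κ, ∃ ν : κ → ℝ, (∀ k, 0 ≤ ν k) ∧ 0 < ν k₀ ∧ ∑ k, ν k • p k = 0 := by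
    intro k₀
    set δ : ℝ := ε / (2 * (‖p k₀‖ + 1)) with hδ
    have hδpos : 0 < δ := by positivity
    have hpk₀aff : p k₀ ∈ affineSpan ℝ K :=
      subset_affineSpan ℝ K (subset_convexHull ℝ _ (mem_range_self k₀))
    have hmemaff : -δ • p k₀ ∈ affineSpan ℝ K := by
      have := AffineSubspace.smul_vsub_vadd_mem (affineSpan ℝ K) (-δ) hpk₀aff h0aff h0aff
      simpa using this
    have hmem : -δ • p k₀ ∈ K := by
      refine hball _ hmemaff ?_
      rw [dist_zero_right, norm_smul]
      have h1 : ‖(-δ : ℝ)‖ = δ := by rw [norm_neg, Real.norm_of_nonneg hδpos.le]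
      rw [h1]
      have h2 : δ * ‖p k₀‖ < δ * (‖p k₀‖ + 1) := by
        have := hδpos; nlinarith
      have h3 : δ * (‖p k₀‖ + 1) = ε / 2 := by
        rw [hδ]; field_simp
      linarith [half_lt_self hε]
    rw [hK, hrange, Finset.mem_convexHull'] at hmem
    obtain ⟨wf, hw0, hw1, hwsum⟩ := hmem
    have hsum2 : ∑ k, wf (p k) • p k = -δ • p k₀ := by
      rw [← hwsum, Finset.sum_image]
      intro a _ b _ hab
      exact hp hab
    refine ⟨fun k => wf (p k) + if k = k₀ then δ else 0, fun k => ?_, ?_, ?_⟩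
    · have := hw0 (p k) (Finset.mem_image_of_mem p (Finset.mem_univ k))
      by_cases hk : k = k₀
      · subst hk
        have h2 : (if k = k then δ else 0) = δ := if_pos rfl
        show 0 ≤ wf (p k) + if k = k then δ else 0
        rw [h2]; linarith
      · simp only [if_neg hk, add_zero]; exact this
    · have := hw0 (p k₀) (Finset.mem_image_of_mem p (Finset.mem_univ k₀))
      show 0 < wf (p k₀) + if k₀ = k₀ then δ else 0
      rw [if_pos rfl]
      linarith
    · have hsplit : ∑ k, (wf (p k) + if k = k₀ then δ else 0) • p k =
          (∑ k, wf (p k) • p k) + ∑ k, (if k = k₀ then δ else 0) • p k := by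
        rw [← Finset.sum_add_distrib]
        exact Finset.sum_congr rfl fun k _ => add_smul _ _ _
      have hite : ∑ k, (if k = k₀ then δ else 0) • p k = δ • p k₀ := by
        rw [Finset.sum_eq_single k₀]
        · simp
        · intro b _ hb; simp [hb]
        · intro hb; exact absurd (Finset.mem_univ k₀) hb
      rw [hsplit, hsum2, hite]
      simp [neg_smul]
  choose ν hν0 hνpos hνsum using hstep
  refine ⟨fun k => ∑ k₀, ν k₀ k, fun k => ?_, ?_⟩
  · refine Finset.sum_pos' (fun k₀ _ => hν0 k₀ k) ⟨k, Finset.mem_univ k, hνpos k⟩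
  · have h1 : ∑ k, (∑ k₀, ν k₀ k) • p k = ∑ k₀, ∑ k, ν k₀ k • p k := by
      rw [← Finset.sum_comm]
      exact Finset.sum_congr rfl fun k _ => Finset.sum_smul
    rw [h1]
    exact Finset.sum_eq_zero fun k₀ _ => hνsum k₀


end TorusPoly
/-- numerical criterion, polystable case: in the same setting as the torus
numerical criterion, the nonzero vector v* = Σ_{χ ∈ S} w_χ is G-polystable, i.e. its orbit
G·v* is closed, iff the weight polytope N_G(v*) contains the origin in its relative
(intrinsic) interior. -/
theorem torus_polystable_iff_zero_mem_interior_weight_polytope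
    (N : ℕ) (V : Type*) [NormedAddCommGroup V] [NormedSpace ℂ V] [FiniteDimensional ℂ V]
    (S : Finset (Fin (N + 1) → ℤ)) (w : (Fin (N + 1) → ℤ) → V)
    (hindep : LinearIndependent ℂ (fun χ : S => w (χ : Fin (N + 1) → ℤ)))
    (hne : S.Nonempty) :
    IsClosed {v : V | ∃ t : Fin (N + 1) → ℂˣ,
        v = ∑ χ ∈ S, (((∏ j, t j ^ χ j) : ℂˣ) : ℂ) • w χ} ↔
      (0 : Fin (N + 1) → ℝ) ∈
        intrinsicInterior ℝ
          (convexHull ℝ ((fun χ : Fin (N + 1) → ℤ => fun i => (χ i : ℝ)) '' S)) := by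
  classical
  haveI : Nonempty {x // x ∈ S} := ⟨⟨hne.choose, hne.choose_spec⟩⟩
  set χf : {x // x ∈ S} → (Fin (N + 1)) → ℤ := fun k => (k : Fin (N + 1) → ℤ) with hχf
  -- the coordinate linear map
  set Φ : ({x // x ∈ S} → ℂ) →ₗ[ℂ] V :=
    { toFun := fun x => ∑ k : {x // x ∈ S}, x k • w (k : Fin (N + 1) → ℤ)
      map_add' := by
        intro x y
        simp [add_smul, Finset.sum_add_distrib]
      map_smul' := by
        intro c x
        simp [mul_smul, Finset.smul_sum] } with hΦ
  have hker : LinearMap.ker Φ = ⊥ := by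
    rw [LinearMap.ker_eq_bot']
    intro m hm
    have := Fintype.linearIndependent_iff.1 hindep m hm
    funext k
    exact this k
  have hemb := LinearMap.isClosedEmbedding_of_injective hker
  -- coercion computation
  have hcoe : ∀ (t : Fin (N + 1) → ℂˣ) (χ : Fin (N + 1) → ℤ),
      (((∏ j, t j ^ χ j) : ℂˣ) : ℂ) = ∏ j, ((t j : ℂ)) ^ χ j := by
    intro t χ
    rw [← Units.coeHom_apply, map_prod]
    exact Finset.prod_congr rfl fun j _ => by
      rw [Units.coeHom_apply, Units.val_zpow_eq_zpow_val]
  -- the orbit is the image of the coordinatized orbit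
  have himage : {v : V | ∃ t : Fin (N + 1) → ℂˣ,
      v = ∑ χ ∈ S, (((∏ j, t j ^ χ j) : ℂˣ) : ℂ) • w χ} = Φ '' TorusPoly.orbitSet χf := by
    ext v
    constructor
    · rintro ⟨t, rfl⟩
      refine ⟨fun k => ∏ j, ((t j : ℂ)) ^ χf k j,
        ⟨fun j => (t j : ℂ), fun j => Units.ne_zero _, fun k => rfl⟩, ?_⟩
      show ∑ k : {x // x ∈ S}, (∏ j, ((t j : ℂ)) ^ χf k j) • w (k : Fin (N + 1) → ℤ) = _
      rw [Finset.sum_coe_sort S (fun χ => (∏ j, ((t j : ℂ)) ^ χ j) • w χ)]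
      exact Finset.sum_congr rfl fun χ _ => by rw [hcoe]
    · rintro ⟨x, ⟨t, ht0, hx⟩, rfl⟩
      refine ⟨fun j => Units.mk0 (t j) (ht0 j), ?_⟩
      show ∑ k : {x // x ∈ S}, x k • w (k : Fin (N + 1) → ℤ) = _
      have h2 : ∀ χ ∈ S, (((∏ j, (Units.mk0 (t j) (ht0 j)) ^ χ j) : ℂˣ) : ℂ) • w χ =
          (∏ j, (t j) ^ χ j) • w χ := by
        intro χ _
        rw [hcoe]
        rfl
      rw [Finset.sum_congr rfl h2,
        ← Finset.sum_coe_sort S (fun χ => (∏ j, (t j) ^ χ j) • w χ)]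
      exact Finset.sum_congr rfl fun k _ => by rw [hx k]
  -- the weight points
  set p : {x // x ∈ S} → (Fin (N + 1) → ℝ) := fun k i => ((k : Fin (N + 1) → ℤ) i : ℝ) with hP
  have hpinj : Function.Injective p := by
    intro k k' h
    have hkk : (k : Fin (N + 1) → ℤ) = (k' : Fin (N + 1) → ℤ) := by
      funext i
      have h2 : ((k : Fin (N + 1) → ℤ) i : ℝ) = ((k' : Fin (N + 1) → ℤ) i : ℝ) := congrFun h i
      exact_mod_cast h2
    exact Subtype.ext hkk
  have himgset : (fun χ : Fin (N + 1) → ℤ => fun i => (χ i : ℝ)) '' ↑S = Set.range p := by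
    ext y
    constructor
    · rintro ⟨χ, hχ, rfl⟩
      exact ⟨⟨χ, hχ⟩, rfl⟩
    · rintro ⟨k, rfl⟩
      exact ⟨(k : Fin (N + 1) → ℤ), k.2, rfl⟩
  rw [himage, ← hemb.isClosed_iff_image_isClosed, himgset]
  constructor
  · intro hcl
    by_contra hno
    obtain ⟨u, hge, k₁, hpos⟩ := TorusPoly.exists_sep p hpinj hno
    exact TorusPoly.not_isClosed_orbitSet χf u hge k₁ hpos hcl
  · intro hrel
    obtain ⟨lam, hlam, hsum⟩ := TorusPoly.exists_pos_combination p hpinj hrel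
    refine TorusPoly.isClosed_orbitSet χf lam hlam (fun j => ?_)
    have := congrFun hsum j
    rw [Finset.sum_apply] at this
    simpa using this
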